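/- Let n ≥ 1, let A, B ∈ M_n(ℂ), and let r be a real number with 1 ≤ r ≤ 2. Then det(|A+B|^r) ≤ det(I + |A|^r) · det(I + |B|^r), where all three matrices are positive semidefinite so the determinants are nonnegative real numbers. (Determinant form of the paper's Theorem 3.3.) -/

import Mathlib

open Matrix
open scoped ComplexOrder

/-- The `j`-th largest value (0-indexed) of a finite family of real numbers. -/
noncomputable def descSort {n : ℕ} (f : Fin n → ℝ) : Fin n → ℝ :=
  fun j => f (Tuple.sort f j.rev)

/-- The square root of a positive semidefinite matrix, as `PosSemidef.sqrt` was defined in the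
older Mathlib: `U * diagonal (√λ) * Uᴴ` for the eigenvector unitary `U` and eigenvalues `λ`. -/
noncomputable def psdSqrt {n : ℕ} {M : Matrix (Fin n) (Fin n) ℂ} (hM : M.PosSemidef) :
    Matrix (Fin n) (Fin n) ℂ :=
  hM.1.eigenvectorUnitary.1 * diagonal ((↑) ∘ (√·) ∘ hM.1.eigenvalues) *
    (star hM.1.eigenvectorUnitary : Matrix (Fin n) (Fin n) ℂ)

theorem psdSqrt_isHermitian {n : ℕ} {M : Matrix (Fin n) (Fin n) ℂ} (hM : M.PosSemidef) :
    (psdSqrt hM).IsHermitian := by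
  unfold psdSqrt
  apply Matrix.isHermitian_mul_mul_conjTranspose
  rw [Matrix.isHermitian_diagonal_iff]
  intro i
  simp [IsSelfAdjoint, Complex.conj_ofReal]

/-- The absolute value `|A| = (AᴴA)^{1/2}` of a complex matrix. -/
noncomputable def matAbs {n : ℕ} (A : Matrix (Fin n) (Fin n) ℂ) : Matrix (Fin n) (Fin n) ℂ :=
  psdSqrt (Matrix.posSemidef_conjTranspose_mul_self A)

/-- The singular values of `A`, in decreasing order, 0-indexed: `sv A 0 = s₁(A)` is the largest. -/
noncomputable def sv {n : ℕ} (A : Matrix (Fin n) (Fin n) ℂ) : Fin n → ℝ :=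
  descSort (psdSqrt_isHermitian (Matrix.posSemidef_conjTranspose_mul_self A)).eigenvalues

/-- The real power `A^r` of a (positive semidefinite) matrix, via continuous functional calculus. -/
noncomputable def rpowM {n : ℕ} (A : Matrix (Fin n) (Fin n) ℂ) (r : ℝ) :
    Matrix (Fin n) (Fin n) ℂ :=
  cfc (fun x : ℝ => x ^ r) A

/-- The top-`k` indices `j = 0, …, k-1` in `Fin n`. -/
def topIdx (n k : ℕ) : Finset (Fin n) := Finset.univ.filter (fun j : Fin n => (j : ℕ) < k)

/-- The bottom-`k` indices `j = n-k, …, n-1` in `Fin n`. -/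
def botIdx (n k : ℕ) : Finset (Fin n) := Finset.univ.filter (fun j : Fin n => n - k ≤ (j : ℕ))

/-! ### Auxiliary lemmas -/

open scoped InnerProductSpace NNReal

section Aux

variable {n : ℕ}

private lemma psdSqrt_posSemidef {M : Matrix (Fin n) (Fin n) ℂ} (hM : M.PosSemidef) :
    (psdSqrt hM).PosSemidef := by
  unfold psdSqrt
  have hD : (diagonal (((↑) ∘ (√·) ∘ hM.1.eigenvalues) : Fin n → ℂ)).PosSemidef := by
    rw [posSemidef_diagonal_iff]
    intro i
    simp only [Function.comp_apply]
    exact_mod_cast Real.sqrt_nonneg _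
  have := hD.mul_mul_conjTranspose_same (hM.1.eigenvectorUnitary : Matrix (Fin n) (Fin n) ℂ)
  simpa [Unitary.coe_star, Matrix.star_eq_conjTranspose] using this

private lemma psdSqrt_mul_self {M : Matrix (Fin n) (Fin n) ℂ} (hM : M.PosSemidef) :
    psdSqrt hM * psdSqrt hM = M := by
  have hu : star (hM.1.eigenvectorUnitary : Matrix (Fin n) (Fin n) ℂ)
      * (hM.1.eigenvectorUnitary : Matrix (Fin n) (Fin n) ℂ) = 1 :=
    (Matrix.mem_unitaryGroup_iff').mp hM.1.eigenvectorUnitary.2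
  conv_rhs => rw [hM.1.spectral_theorem, Unitary.conjStarAlgAut_apply]
  unfold psdSqrt
  simp only [Matrix.mul_assoc]
  rw [← Matrix.mul_assoc (star _) _, hu, Matrix.one_mul, ← Matrix.mul_assoc (diagonal _),
    diagonal_mul_diagonal]
  congr 3
  funext i
  simp only [Function.comp_apply]
  rw [← Complex.ofReal_mul, Real.mul_self_sqrt (hM.eigenvalues_nonneg i)]
  rfl

private lemma det_unitary_conj (U : Matrix.unitaryGroup (Fin n) ℂ)
    (D : Matrix (Fin n) (Fin n) ℂ) :
    ((U : Matrix (Fin n) (Fin n) ℂ) * D * star (U : Matrix (Fin n) (Fin n) ℂ)).det = D.det := by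
  have h : (U : Matrix (Fin n) (Fin n) ℂ) * star (U : Matrix (Fin n) (Fin n) ℂ) = 1 :=
    (Matrix.mem_unitaryGroup_iff).mp U.2
  rw [det_mul, det_mul, mul_right_comm, ← det_mul, h, det_one, one_mul]

private lemma one_add_unitary_conj (U : Matrix.unitaryGroup (Fin n) ℂ)
    (D : Matrix (Fin n) (Fin n) ℂ) :
    1 + (U : Matrix (Fin n) (Fin n) ℂ) * D * star (U : Matrix (Fin n) (Fin n) ℂ)
      = (U : Matrix (Fin n) (Fin n) ℂ) * (1 + D) * star (U : Matrix (Fin n) (Fin n) ℂ) := by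
  have h : (U : Matrix (Fin n) (Fin n) ℂ) * star (U : Matrix (Fin n) (Fin n) ℂ) = 1 :=
    (Matrix.mem_unitaryGroup_iff).mp U.2
  rw [Matrix.mul_add, Matrix.add_mul, Matrix.mul_one, h]

private lemma det_cfc' (S : Matrix (Fin n) (Fin n) ℂ) (hS : S.IsHermitian) (f : ℝ → ℝ) :
    (cfc f S).det = ∏ i, ((f (hS.eigenvalues i) : ℝ) : ℂ) := by
  rw [hS.cfc_eq, Matrix.IsHermitian.cfc, Unitary.conjStarAlgAut_apply,
    det_unitary_conj, det_diagonal]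
  rfl

private lemma det_one_add_cfc (S : Matrix (Fin n) (Fin n) ℂ) (hS : S.IsHermitian) (f : ℝ → ℝ) :
    (1 + cfc f S).det = ∏ i, ((1 + f (hS.eigenvalues i) : ℝ) : ℂ) := by
  rw [hS.cfc_eq, Matrix.IsHermitian.cfc, Unitary.conjStarAlgAut_apply,
    one_add_unitary_conj, det_unitary_conj,
    ← Matrix.diagonal_one, Matrix.diagonal_add, det_diagonal]
  push_cast
  rfl

private lemma det_one_add_sq (S : Matrix (Fin n) (Fin n) ℂ) (hS : S.IsHermitian) :
    (1 + S * S).det = ∏ i, ((1 + (hS.eigenvalues i) ^ 2 : ℝ) : ℂ) := by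
  have hu : star (hS.eigenvectorUnitary : Matrix (Fin n) (Fin n) ℂ)
      * (hS.eigenvectorUnitary : Matrix (Fin n) (Fin n) ℂ) = 1 :=
    (Matrix.mem_unitaryGroup_iff').mp hS.eigenvectorUnitary.2
  have hSS : S * S = (hS.eigenvectorUnitary : Matrix (Fin n) (Fin n) ℂ)
      * (diagonal (RCLike.ofReal ∘ hS.eigenvalues) * diagonal (RCLike.ofReal ∘ hS.eigenvalues))
      * star (hS.eigenvectorUnitary : Matrix (Fin n) (Fin n) ℂ) := by
    conv_lhs => rw [hS.spectral_theorem, Unitary.conjStarAlgAut_apply]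
    simp only [Matrix.mul_assoc]
    rw [← Matrix.mul_assoc (star _) _, hu, Matrix.one_mul]
  rw [hSS, one_add_unitary_conj, det_unitary_conj, diagonal_mul_diagonal,
    ← Matrix.diagonal_one, Matrix.diagonal_add, det_diagonal]
  push_cast
  ring_nf
  rfl

private lemma eigenvalues_le_one {Z : Matrix (Fin n) (Fin n) ℂ} (hZ : Z.PosSemidef)
    (h1Z : (1 - Z).PosSemidef) (i : Fin n) : hZ.1.eigenvalues i ≤ 1 := by
  set v := hZ.1.eigenvectorBasis i with hv
  have h1 : ⟪v, v⟫_ℂ = 1 := by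
    rw [@inner_self_eq_norm_sq_to_K ℂ, hZ.1.eigenvectorBasis.orthonormal.1 i]
    norm_num
  rw [EuclideanSpace.inner_eq_star_dotProduct] at h1
  have hvv : dotProduct (star ⇑v) ⇑v = 1 := by rw [dotProduct_comm]; exact h1
  have h := h1Z.dotProduct_mulVec_nonneg ⇑v
  rw [Matrix.sub_mulVec, Matrix.one_mulVec, hZ.1.mulVec_eigenvectorBasis,
    dotProduct_sub, dotProduct_smul, hvv] at h
  have h2 : (0:ℂ) ≤ ((1 - hZ.1.eigenvalues i : ℝ) : ℂ) := by
    push_cast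
    convert h using 1
    simp [smul_eq_mul]
  have := Complex.zero_le_real.mp h2
  linarith

/-- Monotonicity of the determinant: if `0 ≤ X ≤ Y` with `Y` positive definite then
`det X ≤ det Y`. -/
private lemma det_le_det_posdef {X Y : Matrix (Fin n) (Fin n) ℂ} (hX : X.PosSemidef)
    (hY : Y.PosDef) (hXY : (Y - X).PosSemidef) : X.det ≤ Y.det := by
  obtain ⟨T, hTdef⟩ : ∃ T, T = psdSqrt hY.posSemidef := ⟨_, rfl⟩
  have hT : T.PosSemidef := hTdef ▸ psdSqrt_posSemidef hY.posSemidef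
  have hTT : T * T = Y := hTdef ▸ psdSqrt_mul_self hY.posSemidef
  have hdetY : Y.det ≠ 0 := hY.det_pos.ne'
  have hdT : T.det ≠ 0 := by
    intro h
    exact hdetY (by rw [← hTT, det_mul, h, mul_zero])
  have hTu : IsUnit T.det := isUnit_iff_ne_zero.mpr hdT
  have hTiT : T⁻¹ * T = 1 := Matrix.nonsing_inv_mul T hTu
  have hTTi : T * T⁻¹ = 1 := Matrix.mul_nonsing_inv T hTu
  have hTih : (T⁻¹).IsHermitian := hT.1.inv
  obtain ⟨Z, hZdef⟩ : ∃ Z, Z = T⁻¹ * X * T⁻¹ := ⟨_, rfl⟩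
  have hZ : Z.PosSemidef := by
    have := hX.conjTranspose_mul_mul_same (B := T⁻¹)
    rwa [hTih.eq, ← hZdef] at this
  have hTiY : T⁻¹ * Y * T⁻¹ = 1 := by
    rw [← hTT, ← Matrix.mul_assoc, Matrix.mul_assoc (T⁻¹ * T), hTiT, Matrix.one_mul, hTTi]
  have h1Z : (1 - Z).PosSemidef := by
    have := hXY.conjTranspose_mul_mul_same (B := T⁻¹)
    rwa [hTih.eq, Matrix.mul_sub, Matrix.sub_mul, hTiY, ← hZdef] at this
  have hdz : ∏ i, hZ.1.eigenvalues i ≤ 1 :=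
    Finset.prod_le_one (fun i _ => hZ.eigenvalues_nonneg i)
      (fun i _ => eigenvalues_le_one hZ h1Z i)
  have hZdet : Z.det = ((∏ i, hZ.1.eigenvalues i : ℝ) : ℂ) := by
    rw [hZ.1.det_eq_prod_eigenvalues]; push_cast; rfl
  have hXZ : X = T * Z * T := by
    rw [hZdef, ← Matrix.mul_assoc, ← Matrix.mul_assoc, hTTi, Matrix.one_mul,
      Matrix.mul_assoc, hTiT, Matrix.mul_one]
  have hXdet : X.det = Z.det * Y.det := by
    rw [hXZ, det_mul, det_mul, ← hTT, det_mul]; ring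
  rw [hXdet]
  calc Z.det * Y.det ≤ 1 * Y.det := by
        apply mul_le_mul_of_nonneg_right _ hY.det_pos.le
        rw [hZdet]
        exact_mod_cast Complex.real_le_real.mpr hdz
    _ = Y.det := one_mul _

/-- The core inequality (the case `r = 2`):
`det((A+B)ᴴ(A+B)) ≤ det(1 + AᴴA) · det(1 + BᴴB)`. -/
private lemma core2 (A B : Matrix (Fin n) (Fin n) ℂ) :
    ((A + B)ᴴ * (A + B)).det ≤ (1 + Aᴴ * A).det * (1 + Bᴴ * B).det := by
  obtain ⟨P, hPdef⟩ : ∃ P, P = 1 + Aᴴ * A := ⟨_, rfl⟩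
  obtain ⟨S, hSdef⟩ : ∃ S, S = 1 + Bᴴ * B := ⟨_, rfl⟩
  obtain ⟨Q, hQdef⟩ : ∃ Q, Q = Aᴴ * B - 1 := ⟨_, rfl⟩
  have hP : P.PosDef := hPdef ▸
    Matrix.PosDef.one.add_posSemidef (posSemidef_conjTranspose_mul_self A)
  have hS : S.PosDef := hSdef ▸
    Matrix.PosDef.one.add_posSemidef (posSemidef_conjTranspose_mul_self B)
  haveI : Invertible P := invertibleOfIsUnitDet P hP.det_pos.ne'.isUnit
  set W : Matrix (Fin n ⊕ Fin n) (Fin n ⊕ Fin n) ℂ :=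
    fromBlocks (1 : Matrix (Fin n) (Fin n) ℂ) (-1) A B with hWdef
  have hG : Wᴴ * W = fromBlocks P Q Qᴴ S := by
    rw [hWdef, fromBlocks_conjTranspose, fromBlocks_multiply]
    rw [hPdef, hSdef, hQdef, fromBlocks_inj]
    refine ⟨by simp, by simp [sub_eq_add_neg, add_comm], ?_, by simp⟩
    simp [conjTranspose_mul, sub_eq_add_neg, add_comm]
  have hGpsd : (fromBlocks P Q Qᴴ S).PosSemidef := hG ▸ posSemidef_conjTranspose_mul_self W
  have hSchur : (S - Qᴴ * P⁻¹ * Q).PosSemidef :=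
    (Matrix.PosDef.fromBlocks₁₁ Q S hP).mp hGpsd
  have hQPQ : (Qᴴ * P⁻¹ * Q).PosSemidef :=
    hP.inv.posSemidef.conjTranspose_mul_mul_same (B := Q)
  have hsub : (S - (S - Qᴴ * P⁻¹ * Q)).PosSemidef := by simpa using hQPQ
  have hmono : (S - Qᴴ * P⁻¹ * Q).det ≤ S.det := det_le_det_posdef hSchur hS hsub
  have hdetG : (Wᴴ * W).det = P.det * (S - Qᴴ * P⁻¹ * Q).det := by
    rw [hG, det_fromBlocks₁₁, invOf_eq_nonsing_inv]
  have hW : W.det = (A + B).det := by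
    rw [hWdef, det_fromBlocks_one₁₁]
    congr 1
    rw [Matrix.mul_neg, Matrix.mul_one, sub_neg_eq_add, add_comm]
  have hL : ((A + B)ᴴ * (A + B)).det = (Wᴴ * W).det := by
    rw [det_mul, det_mul, det_conjTranspose, det_conjTranspose, hW]
  rw [hL, hdetG]
  calc P.det * (S - Qᴴ * P⁻¹ * Q).det ≤ P.det * S.det :=
        mul_le_mul_of_nonneg_left hmono hP.det_pos.le
    _ = (1 + Aᴴ * A).det * (1 + Bᴴ * B).det := by rw [hPdef, hSdef]

private lemma one_add_rpow_le {x : ℝ} (hx : 0 ≤ x) {p : ℝ} (hp0 : 0 ≤ p) (hp1 : p ≤ 1) :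
    (1 + x) ^ p ≤ 1 + x ^ p := by
  lift x to ℝ≥0 using hx
  have h := NNReal.rpow_add_le_add_rpow (1 : ℝ≥0) x hp0 hp1
  rw [NNReal.one_rpow] at h
  exact_mod_cast h

end Aux

/-- determinant form of Theorem 3.3.
For `1 ≤ r ≤ 2`, `det(|A+B|^r) ≤ det(I + |A|^r) · det(I + |B|^r)`
(all determinants are nonnegative reals; the inequality is in the complex order). -/
theorem garg_aujla_det {n : ℕ} (hn : 1 ≤ n)
    (A B : Matrix (Fin n) (Fin n) ℂ) (r : ℝ) (hr1 : 1 ≤ r) (hr2 : r ≤ 2) :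
    (rpowM (matAbs (A + B)) r).det ≤
      (1 + rpowM (matAbs A) r).det * (1 + rpowM (matAbs B) r).det := by
  have hr0 : (0:ℝ) ≤ r / 2 := by linarith
  have hr1' : r / 2 ≤ 1 := by linarith
  have hSAB : (matAbs (A + B)).PosSemidef :=
    psdSqrt_posSemidef (posSemidef_conjTranspose_mul_self (A + B))
  have hSA : (matAbs A).PosSemidef :=
    psdSqrt_posSemidef (posSemidef_conjTranspose_mul_self A)
  have hSB : (matAbs B).PosSemidef :=
    psdSqrt_posSemidef (posSemidef_conjTranspose_mul_self B)
  have hsqAB : matAbs (A + B) * matAbs (A + B) = (A + B)ᴴ * (A + B) :=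
    psdSqrt_mul_self (posSemidef_conjTranspose_mul_self (A + B))
  have hsqA : matAbs A * matAbs A = Aᴴ * A :=
    psdSqrt_mul_self (posSemidef_conjTranspose_mul_self A)
  have hsqB : matAbs B * matAbs B = Bᴴ * B :=
    psdSqrt_mul_self (posSemidef_conjTranspose_mul_self B)
  -- eigenvalues (= singular values)
  obtain ⟨s, hs_def⟩ : ∃ s, s = hSAB.1.eigenvalues := ⟨_, rfl⟩
  obtain ⟨a, ha_def⟩ : ∃ a, a = hSA.1.eigenvalues := ⟨_, rfl⟩
  obtain ⟨b, hb_def⟩ : ∃ b, b = hSB.1.eigenvalues := ⟨_, rfl⟩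
  have hs0 : ∀ i, 0 ≤ s i := hs_def ▸ hSAB.eigenvalues_nonneg
  have ha0 : ∀ i, 0 ≤ a i := ha_def ▸ hSA.eigenvalues_nonneg
  have hb0 : ∀ i, 0 ≤ b i := hb_def ▸ hSB.eigenvalues_nonneg
  -- rewrite the three determinants in the goal
  have hL : (rpowM (matAbs (A + B)) r).det = ((∏ i, s i ^ r : ℝ) : ℂ) := by
    rw [show rpowM (matAbs (A + B)) r = cfc (fun x : ℝ => x ^ r) (matAbs (A + B)) from rfl,
      det_cfc' _ hSAB.1, hs_def]
    push_cast
    rfl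
  have hRA : (1 + rpowM (matAbs A) r).det = ((∏ i, (1 + a i ^ r) : ℝ) : ℂ) := by
    rw [show rpowM (matAbs A) r = cfc (fun x : ℝ => x ^ r) (matAbs A) from rfl,
      det_one_add_cfc _ hSA.1, ha_def]
    push_cast
    rfl
  have hRB : (1 + rpowM (matAbs B) r).det = ((∏ i, (1 + b i ^ r) : ℝ) : ℂ) := by
    rw [show rpowM (matAbs B) r = cfc (fun x : ℝ => x ^ r) (matAbs B) from rfl,
      det_one_add_cfc _ hSB.1, hb_def]
    push_cast
    rfl
  rw [hL, hRA, hRB, ← Complex.ofReal_mul, Complex.real_le_real]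
  -- the case r = 2, as a real inequality
  have key2 : (∏ i, s i) ^ 2 ≤ (∏ i, (1 + a i ^ 2)) * (∏ i, (1 + b i ^ 2)) := by
    have e1 : ((A + B)ᴴ * (A + B)).det = (((∏ i, s i) ^ 2 : ℝ) : ℂ) := by
      rw [← hsqAB, det_mul, hSAB.1.det_eq_prod_eigenvalues, ← hs_def]
      push_cast
      ring_nf
      rfl
    have e2 : (1 + Aᴴ * A).det = ((∏ i, (1 + a i ^ 2) : ℝ) : ℂ) := by
      rw [← hsqA, det_one_add_sq _ hSA.1, ← ha_def]
      push_cast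
      rfl
    have e3 : (1 + Bᴴ * B).det = ((∏ i, (1 + b i ^ 2) : ℝ) : ℂ) := by
      rw [← hsqB, det_one_add_sq _ hSB.1, ← hb_def]
      push_cast
      rfl
    have h := core2 A B
    rw [e1, e2, e3, ← Complex.ofReal_mul, Complex.real_le_real] at h
    exact h
  -- assemble, using  x^r = (x^2)^(r/2)  and  (1+x^2)^(r/2) ≤ 1 + x^r
  have hstep : ∀ x : ℝ, 0 ≤ x → (1 + x ^ 2) ^ (r / 2) ≤ 1 + x ^ r := by
    intro x hx
    have h := one_add_rpow_le (sq_nonneg x) hr0 hr1'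
    have hxx : (x ^ 2 : ℝ) ^ (r / 2) = x ^ r := by
      rw [← Real.rpow_natCast_mul hx 2 (r / 2)]
      congr 1
      push_cast
      ring
    rwa [hxx] at h
  have hd0 : 0 ≤ ∏ i, s i := Finset.prod_nonneg (fun i _ => hs0 i)
  have hpa0 : 0 ≤ ∏ i, (1 + a i ^ 2) :=
    Finset.prod_nonneg (fun i _ => by positivity)
  have hpb0 : 0 ≤ ∏ i, (1 + b i ^ 2) :=
    Finset.prod_nonneg (fun i _ => by positivity)
  calc ∏ i, s i ^ r = (∏ i, s i) ^ r := Real.finset_prod_rpow _ _ (fun i _ => hs0 i) r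
    _ = ((∏ i, s i) ^ 2) ^ (r / 2) := by
        rw [← Real.rpow_natCast_mul hd0 2 (r / 2)]
        congr 1
        push_cast
        ring
    _ ≤ ((∏ i, (1 + a i ^ 2)) * (∏ i, (1 + b i ^ 2))) ^ (r / 2) :=
        Real.rpow_le_rpow (sq_nonneg _) key2 hr0
    _ = (∏ i, (1 + a i ^ 2)) ^ (r / 2) * (∏ i, (1 + b i ^ 2)) ^ (r / 2) :=
        Real.mul_rpow hpa0 hpb0
    _ = (∏ i, (1 + a i ^ 2) ^ (r / 2)) * (∏ i, (1 + b i ^ 2) ^ (r / 2)) := by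
        rw [Real.finset_prod_rpow _ _ (fun i _ => by positivity) (r / 2),
          Real.finset_prod_rpow _ _ (fun i _ => by positivity) (r / 2)]
    _ ≤ (∏ i, (1 + a i ^ r)) * (∏ i, (1 + b i ^ r)) := by
        apply mul_le_mul
        · exact Finset.prod_le_prod (fun i _ => by positivity)
            (fun i _ => hstep (a i) (ha0 i))
        · exact Finset.prod_le_prod (fun i _ => by positivity)
            (fun i _ => hstep (b i) (hb0 i))
        · exact Finset.prod_nonneg (fun i _ => by positivity)
        · refine Finset.prod_nonneg (fun i _ => ?_)
          have := Real.rpow_nonneg (ha0 i) r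
          linarith
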